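/- Let g be a 2m-dimensional real Lie algebra whose derived algebra [g,g] has dimension r. Then every almost complex structure J on g has rank of Nijenhuis tensor at most r; in particular, if r < m then g admits no maximally non-integrable almost complex structure (one of rank m). -/

import Mathlib

open Matrix

noncomputable section

/-- Complexification of a real matrix. -/
def cplx {n : ℕ} (A : Matrix (Fin n) (Fin n) ℝ) : Matrix (Fin n) (Fin n) ℂ :=
  A.map Complex.ofReal

/-- The projector `(1/2)(Id + iJ)` of `V ⊗ ℂ` onto the `-i`-eigenspace `V^{0,1}` of the
complexified almost complex structure `J`. -/
def P01 {n : ℕ} (J : Matrix (Fin n) (Fin n) ℝ) : Matrix (Fin n) (Fin n) ℂ :=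
  (2⁻¹ : ℂ) • (1 + Complex.I • cplx J)

/-- The `(0,2)`-part of a complex 2-form `ω` (written as an antisymmetric matrix in the
real basis) with respect to the bigrading induced by `J`: `ω^{0,2}(x,y) = ω(P01 x, P01 y)`. -/
def proj02 {n : ℕ} (J : Matrix (Fin n) (Fin n) ℝ) (ω : Matrix (Fin n) (Fin n) ℂ) :
    Matrix (Fin n) (Fin n) ℂ :=
  (P01 J)ᵀ * ω * P01 J

/-- The Chevalley–Eilenberg differential on complex 1-forms, determined by its values
`Dd r = d e^r` on the dual basis: `d(Σ α_r e^r) = Σ α_r · (d e^r)`. -/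
def dC {n : ℕ} (Dd : Fin n → Matrix (Fin n) (Fin n) ℝ) (α : Fin n → ℂ) :
    Matrix (Fin n) (Fin n) ℂ :=
  ∑ r, α r • cplx (Dd r)

/-- The Chevalley–Eilenberg differential on real 1-forms, as a linear map. -/
def dR {n : ℕ} (Dd : Fin n → Matrix (Fin n) (Fin n) ℝ) :
    (Fin n → ℝ) →ₗ[ℝ] Matrix (Fin n) (Fin n) ℝ :=
  ∑ r, (LinearMap.proj r : (Fin n → ℝ) →ₗ[ℝ] ℝ).smulRight (Dd r)

/-- The rank of the Nijenhuis tensor of the almost complex structure `J`: the complex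
dimension of the image of `μ̄ = π^{0,2} ∘ d` on `(1,0)`-forms.  A complex covector `α` is
of type `(1,0)` iff it annihilates `V^{0,1}`, i.e. `α ∘ P01 = 0`. -/
def nijRank {n : ℕ} (Dd : Fin n → Matrix (Fin n) (Fin n) ℝ)
    (J : Matrix (Fin n) (Fin n) ℝ) : ℕ :=
  Module.finrank ℂ (Submodule.span ℂ
    {ω : Matrix (Fin n) (Fin n) ℂ |
      ∃ α : Fin n → ℂ, Matrix.vecMul α (P01 J) = 0 ∧ ω = proj02 J (dC Dd α)})

/-- The 2-form `e^a ∧ e^b`, as an antisymmetric matrix. -/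
def wR (a b : Fin 6) : Matrix (Fin 6) (Fin 6) ℝ :=
  fun p q => (if p = a ∧ q = b then 1 else 0) - (if p = b ∧ q = a then 1 else 0)

/-- The wedge product of two complex covectors, as an antisymmetric matrix. -/
def wedgeC {n : ℕ} (α β : Fin n → ℂ) : Matrix (Fin n) (Fin n) ℂ :=
  fun p q => α p * β q - α q * β p

/-- ofReal on functions, as an ℝ-linear map. -/
def phiR (ι : Type*) : (ι → ℝ) →ₗ[ℝ] (ι → ℂ) where
  toFun v := fun i => (v i : ℂ)
  map_add' u v := by funext i; simp
  map_smul' c v := by funext i; simp [Complex.ofReal_mul, Complex.real_smul]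

lemma base_change_le {ι : Type*} [Fintype ι] (s : Set (ι → ℝ)) :
    Module.finrank ℂ (Submodule.span ℂ (phiR ι '' s)) ≤
      Module.finrank ℝ (Submodule.span ℝ s) := by
  set V := Submodule.span ℝ s with hV
  have : FiniteDimensional ℝ V := inferInstance
  set d := Module.finrank ℝ V with hd
  let b := Module.finBasis ℝ V
  let c : Fin d → (ι → ℝ) := fun i => (b i : ι → ℝ)
  have h1 : V = Submodule.span ℝ (Set.range c) := by
    have h := congrArg (Submodule.map V.subtype) b.span_eq
    rw [Submodule.map_span, Submodule.map_top, Submodule.range_subtype,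
      ← Set.range_comp] at h
    exact h.symm
  have h2 : Submodule.span ℂ (phiR ι '' s) ≤
      Submodule.span ℂ (Set.range (phiR ι ∘ c)) := by
    rw [Submodule.span_le]
    rintro x ⟨v, hv, rfl⟩
    have hvV : v ∈ Submodule.span ℝ (Set.range c) := h1 ▸ Submodule.subset_span hv
    have hm : phiR ι v ∈ Submodule.map (phiR ι) (Submodule.span ℝ (Set.range c)) :=
      Submodule.mem_map_of_mem hvV
    rw [Submodule.map_span] at hm
    have h3 : Submodule.span ℝ (phiR ι '' Set.range c) ≤
        (Submodule.span ℂ (phiR ι '' Set.range c)).restrictScalars ℝ :=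
      Submodule.span_le_restrictScalars ℝ ℂ _
    have := h3 hm
    rwa [← Set.range_comp] at this
  refine (Submodule.finrank_mono h2).trans ?_
  simpa [Set.finrank] using finrank_range_le_card (⇑(phiR ι) ∘ c)

lemma rows_cols {ι κ : Type*} [Fintype ι] [Fintype κ] (w : ι → κ → ℂ) :
    Module.finrank ℂ (Submodule.span ℂ (Set.range w)) =
      Module.finrank ℂ (Submodule.span ℂ (Set.range fun k => fun i => w i k)) := by
  have h1 := Matrix.rank_eq_finrank_span_row (Matrix.of w)
  have h2 := Matrix.rank_eq_finrank_span_cols (Matrix.of w)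
  exact h1.symm.trans h2

/-- Let `g` be a `2m`-dimensional real Lie algebra whose derived algebra `[g,g]` has
dimension `r` (in coordinates, `[g,g]` is spanned by the vectors `t ↦ (d e^t)(e_p, e_q)`).
Then every almost complex structure `J` on `g` has Nijenhuis rank at most `r`;
in particular, if `r < m` then `g` admits no maximally non-integrable almost complex
structure (one of rank `m`). -/
theorem nijRank_le_derived_dim (m r : ℕ)
    (Dd : Fin (2 * m) → Matrix (Fin (2 * m)) (Fin (2 * m)) ℝ)
    (hanti : ∀ r, (Dd r)ᵀ = -(Dd r))
    (hJacobi : ∀ p q r s, ∑ t, ((Dd t) p q * (Dd s) t r + (Dd t) q r * (Dd s) t p +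
      (Dd t) r p * (Dd s) t q) = 0)
    (hr : Module.finrank ℝ (Submodule.span ℝ
      {v : Fin (2 * m) → ℝ | ∃ p q, v = fun t => (Dd t) p q}) = r) :
    (∀ J : Matrix (Fin (2 * m)) (Fin (2 * m)) ℝ, J * J = -1 → nijRank Dd J ≤ r) ∧
      (r < m → ¬ ∃ J : Matrix (Fin (2 * m)) (Fin (2 * m)) ℝ,
        J * J = -1 ∧ nijRank Dd J = m) := by
  classical
  have H : ∀ J : Matrix (Fin (2 * m)) (Fin (2 * m)) ℝ, J * J = -1 → nijRank Dd J ≤ r := by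
    intro J _
    set Mt : Fin (2 * m) → Matrix (Fin (2 * m)) (Fin (2 * m)) ℂ := fun t => cplx (Dd t) with hMt
    let D : (Fin (2 * m) → ℂ) →ₗ[ℂ] Matrix (Fin (2 * m)) (Fin (2 * m)) ℂ :=
      ∑ t, (LinearMap.proj t).smulRight (Mt t)
    have hD : ∀ α, D α = dC Dd α := by
      intro α
      simp [D, dC, Mt]
    let L : Matrix (Fin (2 * m)) (Fin (2 * m)) ℂ →ₗ[ℂ] Matrix (Fin (2 * m)) (Fin (2 * m)) ℂ :=
      (LinearMap.mulLeft ℂ (P01 J)ᵀ).comp (LinearMap.mulRight ℂ (P01 J))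
    have hL : ∀ ω, L ω = proj02 J ω := by
      intro ω
      simp [L, proj02, LinearMap.mulLeft_apply, LinearMap.mulRight_apply, mul_assoc]
    have stepA : nijRank Dd J ≤ Module.finrank ℂ (LinearMap.range (L ∘ₗ D)) := by
      apply Submodule.finrank_mono
      rw [Submodule.span_le]
      rintro ω ⟨α, -, rfl⟩
      exact ⟨α, by rw [LinearMap.comp_apply, hD, hL]⟩
    have stepB : Module.finrank ℂ (LinearMap.range (L ∘ₗ D)) ≤
        Module.finrank ℂ (LinearMap.range D) := by
      rw [LinearMap.range_comp]
      exact Submodule.finrank_map_le _ _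
    have hrange : LinearMap.range D = Submodule.span ℂ (Set.range Mt) := by
      apply le_antisymm
      · rintro _ ⟨α, rfl⟩
        rw [hD]
        unfold dC
        exact Submodule.sum_mem _ fun t _ =>
          Submodule.smul_mem _ _ (Submodule.subset_span ⟨t, rfl⟩)
      · rw [Submodule.span_le]
        rintro _ ⟨t, rfl⟩
        refine ⟨Pi.single t 1, ?_⟩
        rw [hD]
        unfold dC
        simp [Pi.single_apply, ite_smul, Mt]
    have hdual : Module.finrank ℂ (Submodule.span ℂ (Set.range Mt)) =
        Module.finrank ℂ (Submodule.span ℂ (Set.range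
          fun pq : Fin (2 * m) × Fin (2 * m) => fun t => (Mt t) pq.1 pq.2)) := by
      set e := (LinearEquiv.curry ℂ ℂ (Fin (2 * m)) (Fin (2 * m)))
      have h1 : Module.finrank ℂ (Submodule.span ℂ (Set.range Mt))
          = Module.finrank ℂ (Submodule.span ℂ (Set.range (⇑e.symm ∘ Mt))) := by
        have h2 := (LinearEquiv.finrank_map_eq e.symm (Submodule.span ℂ (Set.range Mt))).symm
        erw [Submodule.map_span, ← Set.range_comp] at h2
        exact h2
      rw [h1, rows_cols]
      rfl
    have hset : (Set.range fun pq : Fin (2 * m) × Fin (2 * m) =>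
          fun t => ((Mt t) pq.1 pq.2 : ℂ))
        = phiR (Fin (2 * m)) '' {v : Fin (2 * m) → ℝ | ∃ p q, v = fun t => (Dd t) p q} := by
      ext x
      constructor
      · rintro ⟨⟨p, q⟩, rfl⟩
        exact ⟨fun t => Dd t p q, ⟨p, q, rfl⟩, rfl⟩
      · rintro ⟨v, ⟨p, q, rfl⟩, rfl⟩
        exact ⟨(p, q), rfl⟩
    calc nijRank Dd J ≤ Module.finrank ℂ (LinearMap.range (L ∘ₗ D)) := stepA
      _ ≤ Module.finrank ℂ (LinearMap.range D) := stepB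
      _ = Module.finrank ℂ (Submodule.span ℂ (Set.range Mt)) := by rw [hrange]
      _ = _ := hdual
      _ ≤ r := by rw [hset]; exact hr ▸ base_change_le _
  refine ⟨H, ?_⟩
  rintro hrm ⟨J, hJ, hrank⟩
  have := H J hJ
  omega
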